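/- arXiv:2405.01278 — 3 statements merged into one kernel-verified Lean document; each statement's English description precedes it below -/
import Mathlib

section
/- Let n ≥ 1, let χ be a primitive Dirichlet character mod n, and let x > 1 be real. Then Φ_n(x) = ∏_{j=1}^n (x^{gcd(j−1,n)} − 1)^{Re(χ(j))}, where the exponents are real powers (rpow) of the positive reals x^{gcd(j−1,n)} − 1, and gcd(0,n) = n for j = 1. -/
open Complex Polynomial Finset

lemma charSum (n : ℕ) [NeZero n] (χ : DirichletCharacter ℂ n)
    (hχ : χ.IsPrimitive) {d : ℕ} (hd : d ∣ n) (hdn : d ≠ n) :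
    ∑ a : ZMod n, (if ZMod.castHom hd (ZMod d) a = 1 then χ a else 0) = 0 := by
  classical
  -- χ is nontrivial on the kernel of unitsMap
  have hker : ¬ (ZMod.unitsMap hd).ker ≤ χ.toUnitHom.ker := by
    intro h
    have hft : χ.FactorsThrough d := (DirichletCharacter.factorsThrough_iff_ker_unitsMap hd).mpr h
    have h1 : χ.conductor ≤ d := Nat.sInf_le hft
    have h2 : d ≤ n := Nat.le_of_dvd (Nat.pos_of_ne_zero (NeZero.ne n)) hd
    rw [hχ] at h1
    omega
  obtain ⟨u0, hu0K, hu0⟩ := SetLike.not_le_iff_exists.mp hker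
  -- reduce sum to units
  have hstep1 : ∑ a : ZMod n, (if ZMod.castHom hd (ZMod d) a = 1 then χ a else 0)
      = ∑ u : (ZMod n)ˣ, (if ZMod.castHom hd (ZMod d) (u : ZMod n) = 1 then χ (u : ZMod n) else 0) := by
    rw [← Finset.sum_image (f := fun a => if ZMod.castHom hd (ZMod d) a = 1 then χ a else 0)
      (g := fun (u : (ZMod n)ˣ) => (u : ZMod n)) (by intro u _ v _ h; exact Units.ext h)]
    refine (Finset.sum_subset (Finset.subset_univ _) ?_).symm
    intro a _ ha
    have : ¬ IsUnit a := by
      intro h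
      exact ha (Finset.mem_image.mpr ⟨h.unit, Finset.mem_univ _, rfl⟩)
    rw [χ.map_nonunit this, ite_self]
  rw [hstep1]
  have hcond : ∀ u : (ZMod n)ˣ, (ZMod.castHom hd (ZMod d) (u : ZMod n) = 1)
      ↔ u ∈ (ZMod.unitsMap hd).ker := by
    intro u
    rw [MonoidHom.mem_ker, ZMod.unitsMap_def]
    constructor
    · intro h; exact Units.ext (by simpa using h)
    · intro h
      have := congrArg Units.val h
      simpa using this
  calc ∑ u : (ZMod n)ˣ, (if ZMod.castHom hd (ZMod d) (u : ZMod n) = 1 then χ (u : ZMod n) else 0)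
      = ∑ u ∈ Finset.univ.filter (· ∈ (ZMod.unitsMap hd).ker), χ (u : ZMod n) := by
        rw [Finset.sum_filter]
        exact Finset.sum_congr rfl fun u _ => if_congr (hcond u) rfl rfl
    _ = ∑ g : (ZMod.unitsMap hd).ker, χ ((g : (ZMod n)ˣ) : ZMod n) := by
        exact Finset.sum_subtype _ (fun u => by simp) _
    _ = 0 := by
        have hF : ((Units.coeHom ℂ).comp ((χ.toUnitHom).comp (ZMod.unitsMap hd).ker.subtype)) ≠ 1 := by
          intro h
          apply hu0
          rw [MonoidHom.mem_ker]
          have := congrArg (fun f => f ⟨u0, hu0K⟩) h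
          simp only [MonoidHom.comp_apply, MonoidHom.one_apply, Units.coeHom_apply] at this
          exact Units.ext (by simpa using this)
        have := sum_hom_units_eq_zero ((Units.coeHom ℂ).comp ((χ.toUnitHom).comp (ZMod.unitsMap hd).ker.subtype)) hF
        rw [← this]
        exact Finset.sum_congr rfl fun g _ => by
          simp [MulChar.coe_toUnitHom]

lemma sum_transfer (n : ℕ) [NeZero n] (f : ZMod n → ℂ) :
    ∑ j ∈ Finset.Icc 1 n, f (j : ℕ) = ∑ a : ZMod n, f a := by
  have hn : 0 < n := Nat.pos_of_ne_zero (NeZero.ne n)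
  refine Finset.sum_nbij' (fun j => ((j : ℕ) : ZMod n))
    (fun a => if a = 0 then n else a.val) ?_ ?_ ?_ ?_ ?_
  · intro a _; exact Finset.mem_univ _
  · intro a _
    by_cases h : a = 0
    · simp [h, Finset.mem_Icc]; omega
    · have h1 : 0 < a.val := by
        rcases Nat.eq_zero_or_pos a.val with h0 | h0
        · exact absurd (by rwa [← ZMod.val_eq_zero]) h
        · exact h0
      have h2 : a.val < n := ZMod.val_lt a
      simp [h, Finset.mem_Icc]
      omega
  · intro j hj
    simp only [Finset.mem_Icc] at hj
    by_cases h : ((j : ℕ) : ZMod n) = 0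
    · have : (n : ℕ) ∣ j := (ZMod.natCast_eq_zero_iff j n).mp h
      have : j = n := by
        rcases this with ⟨k, rfl⟩
        have : k = 1 := by nlinarith [hj.1, hj.2]
        simp [this]
      simp [h, this]
    · have hlt : j < n := by
        rcases Nat.lt_or_ge j n with h' | h'
        · exact h'
        · exfalso; apply h
          have : j = n := le_antisymm hj.2 h'
          simp [this]
      simp [h, ZMod.val_cast_of_lt hlt]
  · intro a _
    by_cases h : a = 0
    · simp [h]
    · simp [h, ZMod.natCast_val, ZMod.cast_id]
  · intro j _; rfl

lemma aux_div_dvd_div {a b n : ℕ} (hab : a ∣ b) (hbn : b ∣ n) : n / b ∣ n / a := by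
  rcases Nat.eq_zero_or_pos n with rfl | hn
  · simp
  rcases Nat.eq_zero_or_pos b with rfl | hb
  · simp at hbn; omega
  rcases Nat.eq_zero_or_pos a with rfl | ha
  · simp at hab; omega
  obtain ⟨s, rfl⟩ := hab
  obtain ⟨t, rfl⟩ := hbn
  rw [Nat.mul_div_cancel_left _ hb, Nat.mul_assoc, Nat.mul_div_cancel_left _ ha]
  exact dvd_mul_left t s

lemma aux_eq_div {e c n : ℕ} (hn : n ≠ 0) (he : e ∣ n) (h : n / e = c) : e = n / c := by
  have he0 : 0 < e := Nat.pos_of_ne_zero (by rintro rfl; simp at h; omega)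
  have : c * e = n := by rw [← h, Nat.div_mul_cancel he]
  have hc : 0 < c := Nat.pos_of_ne_zero (by rintro rfl; simp at this; omega)
  exact (Nat.div_eq_of_eq_mul_left hc (by rw [← this, Nat.mul_comm])).symm

lemma Tsum (n : ℕ) [NeZero n] (χ : DirichletCharacter ℂ n) (hχ : χ.IsPrimitive)
    {c : ℕ} (hc : c ∣ n) :
    ∑ j ∈ (Finset.Icc 1 n).filter (fun j => n / c ∣ j - 1), χ (j : ZMod n)
      = if c = 1 then 1 else 0 := by
  have hn : 0 < n := Nat.pos_of_ne_zero (NeZero.ne n)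
  by_cases h1 : c = 1
  · subst h1
    rw [if_pos rfl]
    have hset : (Finset.Icc 1 n).filter (fun j => n / 1 ∣ j - 1) = {1} := by
      ext j
      simp only [Finset.mem_filter, Finset.mem_Icc, Finset.mem_singleton, Nat.div_one]
      constructor
      · rintro ⟨⟨h1, h2⟩, h3⟩
        have : j - 1 < n := by omega
        have := Nat.eq_zero_of_dvd_of_lt h3 this  -- careful j-1 could be 0; dvd of lt needs pos
        omega
      · rintro rfl
        exact ⟨⟨le_refl _, hn⟩, by simp⟩
    rw [hset]
    simp
  · rw [if_neg h1]
    set d := n / c with hd_def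
    have hd : d ∣ n := Nat.div_dvd_of_dvd hc
    have hdn : d ≠ n := by
      intro h
      have : c * d = n := by rw [hd_def, Nat.mul_div_cancel' hc]
      rw [h] at this
      exact h1 (Nat.eq_of_mul_eq_mul_right hn (by omega))
    rw [Finset.sum_filter]
    have : ∀ j ∈ Finset.Icc 1 n, (if d ∣ j - 1 then χ ((j : ℕ) : ZMod n) else 0)
        = (fun a : ZMod n => if ZMod.castHom hd (ZMod d) a = 1 then χ a else 0) ((j : ℕ) : ZMod n) := by
      intro j hj
      simp only [Finset.mem_Icc] at hj
      show _ = if ZMod.castHom hd (ZMod d) ((j : ℕ) : ZMod n) = 1 then χ ((j : ℕ) : ZMod n) else 0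
      have hcast : ZMod.castHom hd (ZMod d) ((j : ℕ) : ZMod n) = ((j : ℕ) : ZMod d) := by
        simp
      rw [hcast]
      congr 1
      have : ((j : ℕ) : ZMod d) = 1 ↔ d ∣ j - 1 := by
        rw [show (1 : ZMod d) = ((1 : ℕ) : ZMod d) by simp, ZMod.natCast_eq_natCast_iff]
        rw [Nat.ModEq.comm, Nat.modEq_iff_dvd' hj.1]
      simp [this]
    rw [Finset.sum_congr rfl this,
      sum_transfer n (fun a => if ZMod.castHom hd (ZMod d) a = 1 then χ a else 0)]
    exact charSum n χ hχ hd hdn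

open ArithmeticFunction ArithmeticFunction.Moebius in
lemma Ssum (n : ℕ) [NeZero n] (χ : DirichletCharacter ℂ n) (hχ : χ.IsPrimitive) :
    ∀ c > 0, c ∣ n →
    ∑ j ∈ (Finset.Icc 1 n).filter (fun j => n / Nat.gcd (j - 1) n = c), χ (j : ZMod n)
      = (μ c : ℂ) := by
  classical
  have hn : n ≠ 0 := NeZero.ne n
  -- fibering
  have fiber : ∀ c : ℕ, c ∣ n →
      ∑ c' ∈ c.divisors,
        ∑ j ∈ (Finset.Icc 1 n).filter (fun j => n / Nat.gcd (j - 1) n = c'), χ (j : ZMod n)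
      = ∑ j ∈ (Finset.Icc 1 n).filter (fun j => n / c ∣ j - 1), χ (j : ZMod n) := by
    intro c hc
    have hc0 : c ≠ 0 := by rintro rfl; exact hn (Nat.eq_zero_of_zero_dvd hc)
    have key := Finset.sum_fiberwise_of_maps_to
      (s := (Finset.Icc 1 n).filter (fun j => n / c ∣ j - 1)) (t := c.divisors)
      (g := fun j => n / Nat.gcd (j - 1) n) ?mapsto (fun j => χ (j : ZMod n))
    case mapsto =>
      intro j hj
      simp only [Finset.mem_filter] at hj
      have he : Nat.gcd (j - 1) n ∣ n := Nat.gcd_dvd_right _ _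
      have hce : n / c ∣ Nat.gcd (j - 1) n := Nat.dvd_gcd hj.2 (Nat.div_dvd_of_dvd hc)
      have := aux_div_dvd_div hce he
      rw [Nat.div_div_self hc hn] at this
      exact Nat.mem_divisors.mpr ⟨this, hc0⟩
    rw [← key]
    refine Finset.sum_congr rfl fun c' hc' => ?_
    rw [Nat.mem_divisors] at hc'
    congr 1
    ext j
    simp only [Finset.mem_filter, Finset.mem_Icc]
    constructor
    · rintro ⟨h12, h4⟩
      refine ⟨⟨h12, ?_⟩, h4⟩
      have he : Nat.gcd (j - 1) n ∣ n := Nat.gcd_dvd_right _ _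
      have hgcd : Nat.gcd (j - 1) n = n / c' := aux_eq_div hn he h4
      have : n / c ∣ n / c' := aux_div_dvd_div hc'.1 hc
      rw [← hgcd] at this
      exact this.trans (Nat.gcd_dvd_left _ _)
    · rintro ⟨⟨h12, _⟩, h4⟩; exact ⟨h12, h4⟩
  have h := (sum_eq_iff_sum_mul_moebius_eq_on {m | m ∣ n}
      (fun m k hmk hk => hmk.trans hk)
      (f := fun c => ∑ j ∈ (Finset.Icc 1 n).filter (fun j => n / Nat.gcd (j - 1) n = c),
        χ (j : ZMod n))
      (g := fun c => if c = 1 then 1 else 0)).mp ?hyp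
  case hyp =>
    intro m hm hmn
    simp only [Set.mem_setOf_eq] at hmn
    rw [fiber m hmn]
    exact Tsum n χ hχ hmn
  intro c hc0 hcn
  have := h c hc0 hcn
  rw [← this]
  rw [Finset.sum_eq_single_of_mem (⟨c, 1⟩ : ℕ × ℕ)]
  · simp
  · exact Nat.mem_divisorsAntidiagonal.mpr ⟨by ring, by omega⟩
  · rintro ⟨a, b⟩ hab hne
    rw [Nat.mem_divisorsAntidiagonal] at hab
    obtain ⟨hab1, hab2⟩ := hab
    have hb : b ≠ 1 := by
      rintro rfl
      refine hne ?_
      simp only [Prod.mk.injEq]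
      exact ⟨by omega, trivial⟩
    simp [hb]
open ArithmeticFunction ArithmeticFunction.Moebius in
theorem stmt16 (n : ℕ) (hn : 1 ≤ n) (χ : DirichletCharacter ℂ n)
    (hχ : χ.IsPrimitive) (x : ℝ) (hx : 1 < x) :
    (cyclotomic n ℝ).eval x =
      ∏ j ∈ Finset.Icc 1 n,
        (x ^ (Nat.gcd (j - 1) n) - 1) ^ ((χ (j : ZMod n)).re) := by
  classical
  haveI : NeZero n := ⟨by omega⟩
  have hn0 : n ≠ 0 := by omega
  have hxd : ∀ d : ℕ, d ≠ 0 → 0 < x ^ d - 1 := by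
    intro d hd
    have : 1 < x ^ d := one_lt_pow₀ hx hd
    linarith
  -- log of cyclotomic via Möbius inversion
  have hlog : ∀ m > 0, ∑ d ∈ m.divisors, Real.log ((cyclotomic d ℝ).eval x)
      = Real.log (x ^ m - 1) := by
    intro m hm
    rw [← Real.log_prod (fun d _ => (cyclotomic_pos' d hx).ne')]
    congr 1
    rw [← Polynomial.eval_prod, Polynomial.prod_cyclotomic_eq_X_pow_sub_one hm]
    simp
  have hinv := (ArithmeticFunction.sum_eq_iff_sum_mul_moebius_eq
      (f := fun d => Real.log ((cyclotomic d ℝ).eval x))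
      (g := fun m => Real.log (x ^ m - 1))).mp hlog n (by omega)
  rw [Nat.sum_divisorsAntidiagonal (f := fun a b => (μ a : ℝ) * Real.log (x ^ b - 1))] at hinv
  -- rewrite RHS as exp of a sum
  have hcycpos : 0 < (cyclotomic n ℝ).eval x := cyclotomic_pos' n hx
  rw [← Real.exp_log hcycpos, ← hinv]
  have hrw : ∀ j ∈ Finset.Icc 1 n,
      (x ^ (Nat.gcd (j - 1) n) - 1) ^ ((χ (j : ZMod n)).re)
      = Real.exp (Real.log (x ^ (Nat.gcd (j - 1) n) - 1) * (χ (j : ZMod n)).re) := by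
    intro j _
    rw [Real.rpow_def_of_pos (hxd _ (Nat.gcd_pos_of_pos_right _ (by omega)).ne')]
  rw [Finset.prod_congr rfl hrw, ← Real.exp_sum]
  congr 1
  have hmapsto : ∀ j ∈ Finset.Icc 1 n, n / Nat.gcd (j - 1) n ∈ n.divisors :=
    fun j _ => Nat.mem_divisors.mpr ⟨Nat.div_dvd_of_dvd (Nat.gcd_dvd_right _ _), hn0⟩
  rw [← Finset.sum_fiberwise_of_maps_to hmapsto
    (fun j => Real.log (x ^ Nat.gcd (j - 1) n - 1) * (χ (j : ZMod n)).re)]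
  refine Finset.sum_congr rfl fun c hc => ?_
  have hcdvd : c ∣ n := Nat.dvd_of_mem_divisors hc
  have hcpos : 0 < c := Nat.pos_of_mem_divisors hc
  have hfib : ∀ j ∈ (Finset.Icc 1 n).filter (fun j => n / Nat.gcd (j - 1) n = c),
      Nat.gcd (j - 1) n = n / c := by
    intro j hj
    exact aux_eq_div hn0 (Nat.gcd_dvd_right _ _) (Finset.mem_filter.mp hj).2
  calc (μ c : ℝ) * Real.log (x ^ (n / c) - 1)
      = Real.log (x ^ (n / c) - 1) * (((μ c : ℤ) : ℂ)).re := by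
        rw [mul_comm]; norm_num
    _ = Real.log (x ^ (n / c) - 1) *
        (∑ j ∈ (Finset.Icc 1 n).filter (fun j => n / Nat.gcd (j - 1) n = c),
          χ (j : ZMod n)).re := by
        rw [Ssum n χ hχ c hcpos hcdvd]
    _ = ∑ j ∈ (Finset.Icc 1 n).filter (fun j => n / Nat.gcd (j - 1) n = c),
        Real.log (x ^ Nat.gcd (j - 1) n - 1) * (χ (j : ZMod n)).re := by
        rw [Complex.re_sum, Finset.mul_sum]
        refine Finset.sum_congr rfl fun j hj => ?_
        rw [hfib j hj]
end

section
/- Let f : ℕ_{≥1} → ℂ be an arbitrary function, let n ≥ 1 and let χ be a Dirichlet character mod n with conductor d (so d ∣ n). Then ∑_{j=1}^n f(gcd(j−1,n)) · χ(j) = φ(n) · ∑_{δ ∣ n/d} (μ*f)(dδ)/φ(dδ), with gcd(0,n) = n for j = 1. In particular, if χ is a primitive character mod n, then ∑_{j=1}^n f(gcd(j−1,n)) · χ(j) = (μ*f)(n). -/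
open Complex Finset

/-- The Dirichlet convolution `(μ*f)(m) = ∑_{e ∣ m} μ(e) f(m/e)` of the Möbius
function with `f`. -/
noncomputable def muConv (f : ℕ → ℂ) (m : ℕ) : ℂ :=
  ∑ e ∈ m.divisors, (ArithmeticFunction.moebius e : ℂ) * f (m / e)

lemma sum_muConv (f : ℕ → ℂ) {m : ℕ} (hm : 0 < m) :
    ∑ e ∈ m.divisors, muConv f e = f m := by
  refine (ArithmeticFunction.sum_eq_iff_sum_smul_moebius_eq (f := muConv f) (g := f)).mpr ?_ m hm
  intro k hk
  rw [muConv, ← Nat.sum_divisorsAntidiagonal (fun a b => (ArithmeticFunction.moebius a : ℂ) * f b)]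
  refine Finset.sum_congr rfl fun x hx => ?_
  simp [zsmul_eq_mul]

lemma sum_monoidHom_eq {G : Type*} [CommGroup G] [Fintype G] (ψ : G →* ℂ) :
    ∑ g : G, ψ g = if ∀ g, ψ g = 1 then (Fintype.card G : ℂ) else 0 := by
  split_ifs with h
  · simp [h, Finset.card_univ]
  · push_neg at h
    obtain ⟨g0, hg0⟩ := h
    have key : ψ g0 * ∑ g : G, ψ g = ∑ g : G, ψ g := by
      rw [Finset.mul_sum]
      simp_rw [← map_mul]
      exact Fintype.sum_bijective (g0 * ·) (Group.mulLeft_bijective g0) _ _ (fun _ => rfl)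
    have := sub_eq_zero.mpr key
    rw [← sub_one_mul] at this
    rcases mul_eq_zero.mp this with h' | h'
    · exact absurd (by linear_combination h') hg0
    · exact h'

lemma card_ker_unitsMap {n e : ℕ} [NeZero n] (he : e ∣ n) :
    Nat.card (ZMod.unitsMap he).ker * e.totient = n.totient := by
  have : NeZero e := ⟨fun h => (NeZero.ne n) (by simpa [h] using he)⟩
  have h1 : Nat.card (ZMod n)ˣ = Nat.card ((ZMod n)ˣ ⧸ (ZMod.unitsMap he).ker) *
      Nat.card (ZMod.unitsMap he).ker :=
    Subgroup.card_eq_card_quotient_mul_card_subgroup _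
  have h2 : Nat.card ((ZMod n)ˣ ⧸ (ZMod.unitsMap he).ker) = Nat.card (ZMod e)ˣ :=
    Nat.card_congr (QuotientGroup.quotientKerEquivOfSurjective _
      (ZMod.unitsMap_surjective he)).toEquiv
  rw [h2] at h1
  rw [Nat.card_eq_fintype_card, ZMod.card_units_eq_totient] at h1
  rw [Nat.card_eq_fintype_card, ZMod.card_units_eq_totient] at h1
  rw [h1]; ring

lemma factorsThrough_of_dvd {n : ℕ} [NeZero n] (χ : DirichletCharacter ℂ n) {d e : ℕ}
    (he : e ∣ n) (hd : χ.FactorsThrough d) (hde : d ∣ e) : χ.FactorsThrough e := by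
  rw [DirichletCharacter.factorsThrough_iff_ker_unitsMap he]
  have hdn : d ∣ n := dvd_trans hde he
  have hker := (DirichletCharacter.factorsThrough_iff_ker_unitsMap hdn).mp hd
  intro u hu
  apply hker
  rw [MonoidHom.mem_ker] at hu ⊢
  rw [← ZMod.unitsMap_comp hde he, MonoidHom.comp_apply, hu, map_one]

lemma factorsThrough_gcd {n : ℕ} [NeZero n] (χ : DirichletCharacter ℂ n) {d e : ℕ}
    (hd : d ∣ n) (he : e ∣ n) (hfd : χ.FactorsThrough d) (hfe : χ.FactorsThrough e) :
    χ.FactorsThrough (Nat.gcd d e) := by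
  have hg : Nat.gcd d e ∣ n := dvd_trans (Nat.gcd_dvd_left d e) hd
  rw [DirichletCharacter.factorsThrough_iff_ker_unitsMap hg]
  have hkd := (DirichletCharacter.factorsThrough_iff_ker_unitsMap hd).mp hfd
  have hke := (DirichletCharacter.factorsThrough_iff_ker_unitsMap he).mp hfe
  intro u hu
  rw [MonoidHom.mem_ker] at hu
  set a : ℕ := (u : ZMod n).val with ha
  -- a ≡ 1 mod gcd d e
  have hcop : Nat.Coprime a n := ZMod.val_coe_unit_coprime u
  have hmod : 1 ≡ a [MOD Nat.gcd d e] := by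
    have : ((a : ℕ) : ZMod (Nat.gcd d e)) = 1 := by
      have : ZMod.unitsMap hg u = 1 := hu
      have h2 := congrArg Units.val this
      rw [ZMod.unitsMap_def, Units.coe_map] at h2
      simp only [MonoidHom.coe_coe, Units.val_one] at h2
      rw [← h2, ZMod.castHom_apply, ha, ZMod.natCast_val]
    symm
    rwa [← Nat.cast_one, ZMod.natCast_eq_natCast_iff] at this
  obtain ⟨k, hk1, hk2⟩ := Nat.chineseRemainder' hmod
  -- k coprime to lcm d e
  have hckd : Nat.Coprime k d := by
    have : Nat.gcd d k = Nat.gcd d 1 := by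
      rw [Nat.gcd_rec d k, Nat.gcd_rec d 1, hk1]
    simpa [Nat.coprime_comm, Nat.Coprime] using this
  have hcke : Nat.Coprime k e := by
    have : Nat.gcd e k = Nat.gcd e a := by
      rw [Nat.gcd_rec e k, Nat.gcd_rec e a, hk2]
    have hae : Nat.Coprime a e := Nat.Coprime.coprime_dvd_right he hcop
    rw [Nat.coprime_comm, Nat.Coprime, this, ← Nat.Coprime]
    rwa [Nat.coprime_comm]
  have hclcm : Nat.Coprime k (Nat.lcm d e) :=
    Nat.Coprime.coprime_dvd_right (Nat.lcm_dvd_mul d e) (Nat.Coprime.mul_right hckd hcke)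
  have hlcm : Nat.lcm d e ∣ n := Nat.lcm_dvd hd he
  obtain ⟨v, hv⟩ := ZMod.unitsMap_surjective hlcm (ZMod.unitOfCoprime k hclcm)
  -- v ∈ ker of unitsMap to d
  have hvd : ZMod.unitsMap hd v = 1 := by
    have hdl : d ∣ Nat.lcm d e := Nat.dvd_lcm_left d e
    rw [← ZMod.unitsMap_comp hdl hlcm, MonoidHom.comp_apply, hv]
    ext
    rw [ZMod.unitsMap_def, Units.coe_map]
    simp only [MonoidHom.coe_coe, Units.val_one, ZMod.castHom_apply, ZMod.coe_unitOfCoprime]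
    rw [ZMod.cast_natCast hdl]
    have : ((k : ℕ) : ZMod d) = ((1 : ℕ) : ZMod d) := (ZMod.natCast_eq_natCast_iff _ _ _).mpr hk1
    simpa using this
  -- unitsMap to e of v equals that of u
  have hve : ZMod.unitsMap he v = ZMod.unitsMap he u := by
    have hel : e ∣ Nat.lcm d e := Nat.dvd_lcm_right d e
    have hcomp : ZMod.unitsMap he v = ZMod.unitsMap hel (ZMod.unitsMap hlcm v) := by
      rw [← ZMod.unitsMap_comp hel hlcm]; rfl
    ext
    rw [hcomp, hv]
    rw [ZMod.unitsMap_def, ZMod.unitsMap_def, Units.coe_map, Units.coe_map]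
    simp only [MonoidHom.coe_coe, ZMod.castHom_apply, ZMod.coe_unitOfCoprime]
    rw [ZMod.cast_natCast hel]
    have h1 : ((k : ℕ) : ZMod e) = ((a : ℕ) : ZMod e) := (ZMod.natCast_eq_natCast_iff _ _ _).mpr hk2
    rw [h1, ha, ZMod.natCast_val]
  -- conclude
  have hv1 : χ.toUnitHom v = 1 := hkd (by rwa [MonoidHom.mem_ker])
  have hw1 : χ.toUnitHom (v⁻¹ * u) = 1 := hke (by
    rw [MonoidHom.mem_ker, map_mul, map_inv, hve, inv_mul_cancel])
  rw [MonoidHom.mem_ker]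
  have : χ.toUnitHom (v * (v⁻¹ * u)) = 1 := by rw [map_mul, hv1, hw1, mul_one]
  simpa using this

lemma conductor_dvd_of_factorsThrough {n : ℕ} [NeZero n] (χ : DirichletCharacter ℂ n)
    {e : ℕ} (he : e ∣ n) (h : χ.FactorsThrough e) : χ.conductor ∣ e := by
  have hfg := factorsThrough_gcd χ χ.conductor_dvd_level he χ.factorsThrough_conductor h
  have hle : χ.conductor ≤ Nat.gcd χ.conductor e := Nat.sInf_le hfg
  have hge : Nat.gcd χ.conductor e ∣ χ.conductor := Nat.gcd_dvd_left _ _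
  have hpos : 0 < χ.conductor :=
    Nat.pos_of_ne_zero χ.conductor_ne_zero
  have : Nat.gcd χ.conductor e = χ.conductor :=
    le_antisymm (Nat.le_of_dvd hpos hge) hle
  rw [← this]
  exact Nat.gcd_dvd_right _ _

lemma Tsum_s17 {n e : ℕ} [NeZero n] (χ : DirichletCharacter ℂ n) (he : e ∣ n) :
    ∑ x ∈ univ.filter (fun x : ZMod n => ZMod.castHom he (ZMod e) x = 1), χ x
      = if χ.conductor ∣ e then ((Nat.card (ZMod.unitsMap he).ker : ℕ) : ℂ) else 0 := by
  set K := (ZMod.unitsMap he).ker with hK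
  have hker_iff : ∀ u : (ZMod n)ˣ, u ∈ K ↔ ZMod.castHom he (ZMod e) (u : ZMod n) = 1 := by
    intro u
    rw [hK, MonoidHom.mem_ker, Units.ext_iff, ZMod.unitsMap_def, Units.coe_map]
    simp only [MonoidHom.coe_coe, Units.val_one]
  -- restrict to units
  have h1 : ∑ x ∈ univ.filter (fun x : ZMod n => ZMod.castHom he (ZMod e) x = 1), χ x
      = ∑ x ∈ univ.filter (fun x : ZMod n => ZMod.castHom he (ZMod e) x = 1 ∧ IsUnit x), χ x := by
    refine (Finset.sum_subset (fun x hx => ?_) (fun x hx hx' => ?_)).symm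
    · simp only [mem_filter, mem_univ, true_and] at hx ⊢; exact hx.1
    · simp only [mem_filter, mem_univ, true_and, not_and] at hx hx'
      exact χ.map_nonunit (hx' hx)
  -- identify with sum over the kernel subgroup
  have h2 : ∑ u : K, χ ((u : (ZMod n)ˣ) : ZMod n)
      = ∑ x ∈ univ.filter (fun x : ZMod n => ZMod.castHom he (ZMod e) x = 1 ∧ IsUnit x), χ x := by
    refine Finset.sum_nbij (fun u => ((u : (ZMod n)ˣ) : ZMod n)) (fun u _ => ?_) ?_ ?_
      (fun u _ => rfl)
    · simp only [mem_filter, mem_univ, true_and]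
      exact ⟨(hker_iff _).mp u.2, Units.isUnit _⟩
    · intro u _ v _ h
      exact Subtype.ext (Units.ext h)
    · intro x hx
      simp only [coe_filter, mem_univ, true_and, Set.mem_setOf_eq] at hx
      refine ⟨⟨hx.2.unit, (hker_iff _).mpr (by rw [hx.2.unit_spec]; exact hx.1)⟩, ?_, ?_⟩
      · simp
      · simp [hx.2.unit_spec]
  rw [h1, ← h2]
  -- sum of a monoid hom over the group K
  let ψ : K →* ℂ := (Units.coeHom ℂ).comp (χ.toUnitHom.comp K.subtype)
  have hψ : ∀ u : K, ψ u = χ ((u : (ZMod n)ˣ) : ZMod n) := by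
    intro u
    simp only [ψ, MonoidHom.comp_apply, Units.coeHom_apply, Subgroup.coe_subtype]
    rw [MulChar.coe_toUnitHom]
  rw [Finset.sum_congr rfl (fun u _ => (hψ u).symm), sum_monoidHom_eq]
  have hcond : (∀ u : K, ψ u = 1) ↔ χ.conductor ∣ e := by
    constructor
    · intro h
      refine conductor_dvd_of_factorsThrough χ he ?_
      rw [DirichletCharacter.factorsThrough_iff_ker_unitsMap he]
      intro u hu
      rw [MonoidHom.mem_ker, Units.ext_iff, Units.val_one, MulChar.coe_toUnitHom]
      rw [← hψ ⟨u, hu⟩]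
      exact h ⟨u, hu⟩
    · intro h u
      have hft : χ.FactorsThrough e :=
        factorsThrough_of_dvd χ he χ.factorsThrough_conductor h
      have hle := (DirichletCharacter.factorsThrough_iff_ker_unitsMap he).mp hft
      have := hle u.2
      rw [MonoidHom.mem_ker] at this
      rw [hψ, ← MulChar.coe_toUnitHom, this, Units.val_one]
  rw [Nat.card_eq_fintype_card]
  split_ifs with h h' h'
  · rfl
  · exact absurd (hcond.mp h) h'
  · exact absurd (hcond.mpr h') h
  · rfl

lemma range_to_zmod {n e : ℕ} [NeZero n] (he : e ∣ n) (χ : DirichletCharacter ℂ n) :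
    ∑ i ∈ (range n).filter (fun i => e ∣ i), χ (((i + 1 : ℕ)) : ZMod n)
      = ∑ x ∈ univ.filter (fun x : ZMod n => ZMod.castHom he (ZMod e) x = 1), χ x := by
  have hne : e ≠ 0 := fun h => NeZero.ne n (by simpa [h] using he)
  have : NeZero e := ⟨hne⟩
  refine Finset.sum_nbij (fun i => ((i + 1 : ℕ) : ZMod n)) (fun i hi => ?_) ?_ ?_ (fun i _ => rfl)
  · simp only [mem_filter, mem_range] at hi
    simp only [mem_filter, mem_univ, true_and]
    rw [map_natCast]
    push_cast
    rw [(ZMod.natCast_eq_zero_iff i e).mpr hi.2, zero_add]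
  · intro i hi j hj h
    simp only [coe_filter, Set.mem_setOf_eq, mem_range] at hi hj
    simp only at h
    push_cast at h
    have h2 : (i : ZMod n) = (j : ZMod n) := by
      have := add_right_cancel h
      exact this
    calc i = ((i : ZMod n)).val := (ZMod.val_cast_of_lt hi.1).symm
    _ = ((j : ZMod n)).val := by rw [h2]
    _ = j := ZMod.val_cast_of_lt hj.1
  · intro x hx
    simp only [coe_filter, mem_univ, true_and, Set.mem_setOf_eq] at hx
    refine ⟨(x - 1).val, ?_, ?_⟩
    · simp only [coe_filter, Set.mem_setOf_eq, mem_range]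
      constructor
      · exact ZMod.val_lt _
      · have : ((x - 1).val : ZMod e) = 0 := by
          rw [ZMod.natCast_val, ← ZMod.castHom_apply (h := he), map_sub, hx, map_one, sub_self]
        exact (ZMod.natCast_eq_zero_iff _ e).mp this
    · push_cast
      rw [ZMod.natCast_val, ZMod.cast_id]
      ring

theorem stmt17 (f : ℕ → ℂ) (n : ℕ) (hn : 1 ≤ n) (χ : DirichletCharacter ℂ n) :
    (∑ j ∈ Finset.Icc 1 n, f (Nat.gcd (j - 1) n) * χ (j : ZMod n) =
        (Nat.totient n : ℂ) * ∑ δ ∈ (n / χ.conductor).divisors,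
          muConv f (χ.conductor * δ) / (Nat.totient (χ.conductor * δ) : ℂ)) ∧
      (χ.IsPrimitive →
        ∑ j ∈ Finset.Icc 1 n, f (Nat.gcd (j - 1) n) * χ (j : ZMod n) = muConv f n) := by
  have hn0 : n ≠ 0 := by omega
  have : NeZero n := ⟨hn0⟩
  set d := χ.conductor with hdd
  have hd : d ∣ n := χ.conductor_dvd_level
  have hd0 : d ≠ 0 := χ.conductor_ne_zero
  have key : ∑ j ∈ Finset.Icc 1 n, f (Nat.gcd (j - 1) n) * χ (j : ZMod n) =
      (Nat.totient n : ℂ) * ∑ δ ∈ (n / d).divisors,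
        muConv f (d * δ) / (Nat.totient (d * δ) : ℂ) := by
    -- Step 0 : reindex over range n
    rw [← Finset.Ico_add_one_right_eq_Icc, Finset.sum_Ico_eq_sum_range]
    simp only [Nat.succ_sub_one, Nat.add_sub_cancel_left, Nat.add_sub_cancel]
    rw [Finset.sum_congr rfl (fun i (_ : i ∈ range n) => by rw [Nat.add_comm 1 i] :
      ∀ i ∈ range n, f (Nat.gcd i n) * χ ((1 + i : ℕ) : ZMod n)
        = f (Nat.gcd i n) * χ ((i + 1 : ℕ) : ZMod n))]
    -- Step 1 : Möbius inversion of f at gcd i n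
    have step1 : ∀ i, f (Nat.gcd i n) =
        ∑ e ∈ n.divisors, if e ∣ i then muConv f e else 0 := by
      intro i
      have hgpos : 0 < Nat.gcd i n := Nat.gcd_pos_of_pos_right i (by omega)
      have hgd : (Nat.gcd i n).divisors = n.divisors.filter (· ∣ i) := by
        ext e
        simp only [Nat.mem_divisors, mem_filter, Nat.dvd_gcd_iff]
        constructor
        · rintro ⟨⟨h1, h2⟩, -⟩; exact ⟨⟨h2, hn0⟩, h1⟩
        · rintro ⟨⟨h2, -⟩, h1⟩; exact ⟨⟨h1, h2⟩, hgpos.ne'⟩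
      rw [← sum_muConv f hgpos, hgd, Finset.sum_filter]
    simp_rw [step1]
    -- Step 2 : swap sums
    have step2 : ∑ i ∈ range n, (∑ e ∈ n.divisors, if e ∣ i then muConv f e else 0) *
          χ ((i + 1 : ℕ) : ZMod n)
        = ∑ e ∈ n.divisors, muConv f e *
            ∑ i ∈ (range n).filter (fun i => e ∣ i), χ ((i + 1 : ℕ) : ZMod n) := by
      simp_rw [Finset.sum_mul]
      rw [Finset.sum_comm]
      refine Finset.sum_congr rfl fun e _ => ?_
      rw [Finset.mul_sum, Finset.sum_filter]
      refine Finset.sum_congr rfl fun i _ => ?_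
      split_ifs <;> simp
    rw [step2]
    -- Step 3 : evaluate inner character sums
    have step3 : ∀ e ∈ n.divisors, muConv f e *
          ∑ i ∈ (range n).filter (fun i => e ∣ i), χ ((i + 1 : ℕ) : ZMod n)
        = if d ∣ e then muConv f e * ((n.totient : ℂ) / (e.totient : ℂ)) else 0 := by
      intro e he'
      have he : e ∣ n := (Nat.mem_divisors.mp he').1
      have he0 : e ≠ 0 := fun h => hn0 (by simpa [h] using he)
      have hφe : (e.totient : ℂ) ≠ 0 := by
        exact_mod_cast (Nat.totient_pos.mpr (Nat.pos_of_ne_zero he0)).ne'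
      have hcard : ((Nat.card (ZMod.unitsMap he).ker : ℕ) : ℂ)
          = (n.totient : ℂ) / (e.totient : ℂ) := by
        rw [eq_div_iff hφe]
        exact_mod_cast congrArg (Nat.cast (R := ℂ)) (card_ker_unitsMap he)
      rw [range_to_zmod he χ, Tsum_s17 χ he, hcard]
      split_ifs <;> simp
    rw [Finset.sum_congr rfl step3, ← Finset.sum_filter]
    -- Step 4 : reindex divisors multiples of d
    have hnd0 : n / d ≠ 0 := by
      have : 0 < n / d := Nat.div_pos (Nat.le_of_dvd (by omega) hd) (Nat.pos_of_ne_zero hd0)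
      omega
    have step4 : ∑ e ∈ n.divisors.filter (fun e => d ∣ e),
          muConv f e * ((n.totient : ℂ) / (e.totient : ℂ))
        = ∑ δ ∈ (n / d).divisors,
            (n.totient : ℂ) * (muConv f (d * δ) / ((d * δ).totient : ℂ)) := by
      refine Finset.sum_nbij' (i := fun e => e / d) (j := fun δ => d * δ) ?_ ?_ ?_ ?_ ?_
      · intro e he'
        simp only [mem_filter, Nat.mem_divisors] at he'
        obtain ⟨⟨hen, -⟩, hde⟩ := he'
        obtain ⟨δ, rfl⟩ := hde
        simp only [Nat.mul_div_cancel_left δ (Nat.pos_of_ne_zero hd0)]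
        refine Nat.mem_divisors.mpr ⟨?_, hnd0⟩
        obtain ⟨m, hm⟩ := hen
        exact ⟨m, by rw [hm, mul_assoc, Nat.mul_div_cancel_left _ (Nat.pos_of_ne_zero hd0)]⟩
      · intro δ hδ
        simp only [Nat.mem_divisors] at hδ
        simp only [mem_filter, Nat.mem_divisors]
        obtain ⟨m, hm⟩ := hδ.1
        refine ⟨⟨⟨m, ?_⟩, hn0⟩, Dvd.intro δ rfl⟩
        rw [← Nat.div_mul_cancel hd, hm]
        ring
      · intro e he'
        simp only [mem_filter] at he'
        exact Nat.mul_div_cancel' he'.2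
      · intro δ _
        exact Nat.mul_div_cancel_left δ (Nat.pos_of_ne_zero hd0)
      · intro e he'
        simp only [mem_filter] at he'
        rw [Nat.mul_div_cancel' he'.2]
        ring
    rw [step4, ← Finset.mul_sum]
  refine ⟨key, fun hprim => ?_⟩
  have hdn : d = n := hprim
  rw [key, hdn, Nat.div_self (by omega), Nat.divisors_one, Finset.sum_singleton, mul_one]
  have hφ : (n.totient : ℂ) ≠ 0 := by
    exact_mod_cast (Nat.totient_pos.mpr (by omega)).ne'
  field_simp
end

section
/- Let n > 1 and let x ∈ ℂ with |x| < 1. Then Φ_n^*(x) = exp(−∑_{k=1}^∞ c_n^*(k) x^k / k), where the series on the right converges absolutely. -/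
open Complex Polynomial Finset

/-- The unitary gcd `(j,n)_*`: the largest `d` with `d ∣ j`, `d ∣ n` and `gcd(d, n/d) = 1`. -/
def ugcd (j n : ℕ) : ℕ :=
  Nat.findGreatest (fun d => d ∣ j ∧ d ∣ n ∧ Nat.gcd d (n / d) = 1) n

/-- The unitary cyclotomic polynomial `Φ_n^*(X) = ∏_{1 ≤ j ≤ n, (j,n)_* = 1} (X − ζ_n^j)`. -/
noncomputable def unitaryCyc (n : ℕ) : Polynomial ℂ :=
  ∏ j ∈ (Finset.Icc 1 n).filter (fun j => ugcd j n = 1),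
    (X - C (Complex.exp (2 * Real.pi * Complex.I / n) ^ j))

/-- The unitary Ramanujan sum `c_n^*(k) = ∑_{1 ≤ j ≤ n, (j,n)_* = 1} exp(2πijk/n)`. -/
noncomputable def unitaryRamanujanSum (n k : ℕ) : ℂ :=
  ∑ j ∈ (Finset.Icc 1 n).filter (fun j => ugcd j n = 1),
    Complex.exp (2 * Real.pi * Complex.I * j * k / n)

lemma my_findGreatest_congr {P Q : ℕ → Prop} [DecidablePred P] [DecidablePred Q]
    (h : ∀ k, P k ↔ Q k) : ∀ n, Nat.findGreatest P n = Nat.findGreatest Q n := by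
  intro n
  induction n with
  | zero => rfl
  | succ m ih =>
    rw [Nat.findGreatest_succ, Nat.findGreatest_succ, ih]
    by_cases hp : P (m + 1)
    · rw [if_pos hp, if_pos ((h _).mp hp)]
    · rw [if_neg hp, if_neg fun hq => hp ((h _).mpr hq)]

lemma ugcd_sub {j n : ℕ} (hj : j ≤ n) : ugcd (n - j) n = ugcd j n := by
  refine my_findGreatest_congr (fun d => ?_) n
  constructor
  · rintro ⟨h1, h2, h3⟩
    refine ⟨?_, h2, h3⟩
    have := Nat.dvd_sub h2 h1
    rwa [Nat.sub_sub_self hj] at this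
  · rintro ⟨h1, h2, h3⟩
    exact ⟨Nat.dvd_sub h2 h1, h2, h3⟩

lemma ugcd_self {n : ℕ} (hn : 0 < n) : n ≤ ugcd n n := by
  refine Nat.le_findGreatest le_rfl ⟨dvd_rfl, dvd_rfl, ?_⟩
  rw [Nat.div_self hn, Nat.gcd_one_right]

theorem stmt18 (n : ℕ) (hn : 1 < n) (x : ℂ) (hx : ‖x‖ < 1) :
    Summable (fun k : ℕ =>
      ‖unitaryRamanujanSum n (k + 1) * x ^ (k + 1) / (k + 1)‖) ∧
    (unitaryCyc n).eval x =
      Complex.exp (-∑' k : ℕ, unitaryRamanujanSum n (k + 1) * x ^ (k + 1) / (k + 1)) := by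
  have hn0 : 0 < n := by omega
  have hnC : (n : ℂ) ≠ 0 := Nat.cast_ne_zero.mpr hn0.ne'
  set S : Finset ℕ := (Finset.Icc 1 n).filter (fun j => ugcd j n = 1) with hS
  set ζ : ℂ := Complex.exp (2 * Real.pi * Complex.I / n) with hζ
  -- basic facts
  have hζabs : ‖ζ‖ = 1 := by
    rw [hζ, Complex.norm_exp]
    have : (2 * (Real.pi : ℂ) * I / n).re = 0 := by
      simp [Complex.div_re, Complex.mul_re, Complex.mul_im]
    rw [this, Real.exp_zero]
  have hζn : ζ ^ n = 1 := by
    rw [hζ, ← Complex.exp_nat_mul, mul_div_cancel₀ _ hnC, Complex.exp_two_pi_mul_I]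
  have hmemS : ∀ j ∈ S, 1 ≤ j ∧ j ≤ n ∧ ugcd j n = 1 := by
    intro j hj
    rw [hS, Finset.mem_filter, Finset.mem_Icc] at hj
    exact ⟨hj.1.1, hj.1.2, hj.2⟩
  have hne_n : ∀ j ∈ S, j ≠ n := by
    intro j hj h
    have := (hmemS j hj).2.2
    rw [h] at this
    have := ugcd_self hn0
    omega
  have hinvol : ∀ j ∈ S, n - j ∈ S := by
    intro j hj
    obtain ⟨h1, h2, h3⟩ := hmemS j hj
    have hjn : j < n := lt_of_le_of_ne h2 (hne_n j hj)
    rw [hS, Finset.mem_filter, Finset.mem_Icc]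
    exact ⟨⟨by omega, by omega⟩, by rw [ugcd_sub h2, h3]⟩
  -- abs bounds
  have habs : ∀ j : ℕ, ‖ζ ^ j * x‖ < 1 := by
    intro j
    rw [norm_mul, norm_pow, hζabs, one_pow, one_mul]
    exact hx
  have hne1 : ∀ j : ℕ, 1 - ζ ^ j * x ≠ 0 := by
    intro j h
    have heq : ζ ^ j * x = 1 := by linear_combination -h
    have := habs j
    rw [heq] at this
    simp at this
  -- exponent identity
  have hexpj : ∀ j k : ℕ, Complex.exp (2 * Real.pi * I * j * k / n) = (ζ ^ j) ^ k := by
    intro j k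
    rw [hζ, ← Complex.exp_nat_mul, ← Complex.exp_nat_mul]
    congr 1
    field_simp
  -- per-j Taylor series of -log
  have hj_sum : ∀ j : ℕ, HasSum (fun k : ℕ => (ζ ^ j * x) ^ (k + 1) / ((k : ℂ) + 1))
      (-Complex.log (1 - ζ ^ j * x)) := by
    intro j
    have h0 := Complex.hasSum_taylorSeries_neg_log
      (z := ζ ^ j * x) (by exact habs j)
    have h1 := (hasSum_nat_add_iff' (f := fun k : ℕ => (ζ ^ j * x) ^ k / (k : ℂ)) 1).mpr h0
    simpa using h1
  -- rewrite the general term as a finite sum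
  have hterm_eq : ∀ k : ℕ, unitaryRamanujanSum n (k + 1) * x ^ (k + 1) / ((k : ℂ) + 1)
      = ∑ j ∈ S, (ζ ^ j * x) ^ (k + 1) / ((k : ℂ) + 1) := by
    intro k
    rw [unitaryRamanujanSum, Finset.sum_mul, Finset.sum_div]
    refine Finset.sum_congr rfl fun j hj => ?_
    rw [hexpj j (k + 1), mul_pow]
  have hSsum : HasSum (fun k : ℕ => ∑ j ∈ S, (ζ ^ j * x) ^ (k + 1) / ((k : ℂ) + 1))
      (∑ j ∈ S, -Complex.log (1 - ζ ^ j * x)) :=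
    hasSum_sum fun j _ => hj_sum j
  have hmain : HasSum (fun k : ℕ => unitaryRamanujanSum n (k + 1) * x ^ (k + 1) / ((k : ℂ) + 1))
      (∑ j ∈ S, -Complex.log (1 - ζ ^ j * x)) := by
    simpa only [← hterm_eq] using hSsum
  refine ⟨summable_norm_iff.mpr hmain.summable, ?_⟩
  rw [hmain.tsum_eq]
  have hexp_rhs : Complex.exp (-∑ j ∈ S, -Complex.log (1 - ζ ^ j * x))
      = ∏ j ∈ S, (1 - ζ ^ j * x) := by
    rw [← Finset.sum_neg_distrib]
    simp only [neg_neg]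
    rw [Complex.exp_sum]
    exact Finset.prod_congr rfl fun j _ => Complex.exp_log (hne1 j)
  rw [hexp_rhs]
  have heval : (unitaryCyc n).eval x = ∏ j ∈ S, (x - ζ ^ j) := by
    rw [unitaryCyc, eval_prod]
    simp [hζ, hS]
  rw [heval]
  -- the symmetry argument
  have hfactor : ∀ j ∈ S, x - ζ ^ j = (-ζ ^ j) * (1 - ζ ^ (n - j) * x) := by
    intro j hj
    have h2 := (hmemS j hj).2.1
    have hzz : ζ ^ j * ζ ^ (n - j) = 1 := by
      rw [← pow_add, Nat.add_sub_cancel' h2, hζn]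
    linear_combination -x * hzz
  rw [Finset.prod_congr rfl hfactor, Finset.prod_mul_distrib]
  have hrein : ∏ j ∈ S, (1 - ζ ^ (n - j) * x) = ∏ j ∈ S, (1 - ζ ^ j * x) := by
    refine Finset.prod_nbij' (fun j => n - j) (fun j => n - j) hinvol hinvol
      (fun a ha => Nat.sub_sub_self (hmemS a ha).2.1)
      (fun a ha => Nat.sub_sub_self (hmemS a ha).2.1)
      (fun a _ => rfl)
  rw [hrein]
  have hconst : ∏ j ∈ S, (-ζ ^ j) = 1 := by
    have hprodeq : ∏ j ∈ S, (-ζ ^ j) = (-1 : ℂ) ^ S.card * ζ ^ (∑ j ∈ S, j) := by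
      calc ∏ j ∈ S, (-ζ ^ j) = ∏ j ∈ S, ((-1 : ℂ) * ζ ^ j) := by
            refine Finset.prod_congr rfl fun j _ => by ring
        _ = (-1 : ℂ) ^ S.card * ζ ^ (∑ j ∈ S, j) := by
            rw [Finset.prod_mul_distrib, Finset.prod_const, Finset.prod_pow_eq_pow_sum]
    have hTsym : ∑ j ∈ S, j = ∑ j ∈ S, (n - j) := by
      refine Finset.sum_nbij' (fun j => n - j) (fun j => n - j) hinvol hinvol
        (fun a ha => Nat.sub_sub_self (hmemS a ha).2.1)
        (fun a ha => Nat.sub_sub_self (hmemS a ha).2.1)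
        (fun a ha => (Nat.sub_sub_self (hmemS a ha).2.1).symm)
    have h2T : (∑ j ∈ S, j) + (∑ j ∈ S, j) = n * S.card := by
      nth_rewrite 1 [hTsym]
      rw [← Finset.sum_add_distrib]
      rw [Finset.sum_congr rfl fun j hj => Nat.sub_add_cancel (hmemS j hj).2.1]
      rw [Finset.sum_const, smul_eq_mul, mul_comm]
    have hζT : ζ ^ (∑ j ∈ S, j) = (-1 : ℂ) ^ S.card := by
      rw [hζ, ← Complex.exp_nat_mul, ← Complex.exp_pi_mul_I, ← Complex.exp_nat_mul]
      congr 1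
      have h2C : ((∑ j ∈ S, j : ℕ) : ℂ) + ((∑ j ∈ S, j : ℕ) : ℂ) = (n : ℂ) * (S.card : ℂ) := by
        exact_mod_cast congrArg (Nat.cast : ℕ → ℂ) h2T
      push_cast at h2C ⊢
      field_simp
      linear_combination h2C
    rw [hprodeq, hζT, ← mul_pow]
    norm_num
  rw [hconst, one_mul]
end
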